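/- For p > 0 and the constant c_p = Γ(p/2)Γ(1/2)/Γ((p+1)/2), the Ullman density ρ(x) = 1_{|x|≤1} · (p|x|^{p-1}/π) · ∫_{|x|}^1 y^{-p}/√(1-y²) dy defines a probability measure on [-1,1], i.e. ∫_{-1}^1 ρ(x) dx = 1. -/

import Mathlib

open MeasureTheory

/-- The Ullman density: `ρ(x) = (p|x|^{p-1}/π) ∫_{|x|}^1 y^{-p}/√(1-y²) dy`. -/
noncomputable def ullmanDensity (p x : ℝ) : ℝ :=
  p * |x| ^ (p - 1) / Real.pi * ∫ y in |x|..1, y ^ (-p) / Real.sqrt (1 - y ^ 2)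

namespace UllmanAux

open Set Real Filter Topology intervalIntegral

/-- The inner integrand. -/
noncomputable def g (p y : ℝ) : ℝ := y ^ (-p) / Real.sqrt (1 - y ^ 2)

lemma meas_g (p : ℝ) : Measurable (g p) := by
  have h1 : Measurable fun y : ℝ => y ^ (-p) :=
    measurable_of_continuousOn_compl_singleton 0
      (fun x hx => (Real.continuousAt_rpow_const x (-p) (Or.inl hx)).continuousWithinAt)
  have h2 : Continuous fun y : ℝ => Real.sqrt (1 - y ^ 2) :=
    Real.continuous_sqrt.comp (continuous_const.sub (continuous_pow 2))
  exact h1.div h2.measurable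

lemma g_nonneg (p : ℝ) {y : ℝ} (hy : 0 ≤ y) : 0 ≤ g p y :=
  div_nonneg (Real.rpow_nonneg hy _) (Real.sqrt_nonneg _)

lemma bound1 {y : ℝ} (h0 : 0 ≤ y) (h1 : y ≤ 1) :
    1 / Real.sqrt (1 - y ^ 2) ≤ (1 - y) ^ (-(1/2) : ℝ) := by
  rcases eq_or_lt_of_le h1 with rfl | h1
  · norm_num
  · have hy : 0 < 1 - y := by linarith
    rw [Real.rpow_neg hy.le, ← Real.sqrt_eq_rpow, one_div]
    have hle : Real.sqrt (1 - y) ≤ Real.sqrt (1 - y ^ 2) :=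
      Real.sqrt_le_sqrt (by nlinarith)
    have hpos : 0 < Real.sqrt (1 - y) := Real.sqrt_pos.2 hy
    exact inv_anti₀ hpos hle

lemma intM (a b : ℝ) :
    IntervalIntegrable (fun y : ℝ => (1 - y) ^ (-(1/2) : ℝ)) volume a b := by
  have := (intervalIntegrable_rpow' (a := 1 - a) (b := 1 - b) (r := -(1/2))
    (by norm_num)).comp_sub_left 1
  simpa using this

lemma int_inv_sqrt {a b : ℝ} (ha : 0 ≤ a) (hb : b ≤ 1) (hab : a ≤ b) :
    IntervalIntegrable (fun y : ℝ => 1 / Real.sqrt (1 - y ^ 2)) volume a b := by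
  refine (intM a b).mono_fun ?_ ?_
  · exact ((measurable_const.div ((Real.continuous_sqrt.comp
      (continuous_const.sub (continuous_pow 2))).measurable))).aestronglyMeasurable
  · rw [uIoc_of_le hab]
    filter_upwards [ae_restrict_mem measurableSet_Ioc] with y hy
    have hy0 : 0 ≤ y := ha.trans hy.1.le
    have hy1 : y ≤ 1 := hy.2.trans hb
    have hM : (0:ℝ) ≤ (1 - y) ^ (-(1/2) : ℝ) := Real.rpow_nonneg (by linarith) _
    simp only [Real.norm_eq_abs, abs_of_nonneg (div_nonneg zero_le_one (Real.sqrt_nonneg _)),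
      abs_of_nonneg hM]
    exact bound1 hy0 hy1

lemma integral_inv_sqrt {a b : ℝ} (ha : 0 ≤ a) (hb : b ≤ 1) (hab : a ≤ b) :
    ∫ y in a..b, 1 / Real.sqrt (1 - y ^ 2) = Real.arcsin b - Real.arcsin a := by
  refine integral_eq_sub_of_hasDerivAt_of_le hab Real.continuous_arcsin.continuousOn
    (fun x hx => Real.hasDerivAt_arcsin ?_ ?_) (int_inv_sqrt ha hb hab)
  · have : (-1:ℝ) < x := by linarith [hx.1]
    exact this.ne'
  · exact (hx.2.trans_le hb).ne

lemma g_int (p : ℝ) (hp : 0 < p) {a b : ℝ} (ha : 0 < a) (hb : b ≤ 1) (hab : a ≤ b) :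
    IntervalIntegrable (g p) volume a b := by
  refine ((intM a b).const_mul (a ^ (-p))).mono_fun
    ((meas_g p).aestronglyMeasurable) ?_
  rw [uIoc_of_le hab]
  filter_upwards [ae_restrict_mem measurableSet_Ioc] with y hy
  have hy0 : 0 < y := ha.trans_le hy.1.le
  have hy1 : y ≤ 1 := hy.2.trans hb
  have hgy : 0 ≤ g p y := g_nonneg p hy0.le
  have hM : (0:ℝ) ≤ (1 - y) ^ (-(1/2) : ℝ) := Real.rpow_nonneg (by linarith) _
  have hrp : y ^ (-p) ≤ a ^ (-p) :=
    Real.rpow_le_rpow_of_nonpos ha hy.1.le (by linarith)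
  have h2 : (0:ℝ) ≤ a ^ (-p) := Real.rpow_nonneg ha.le _
  simp only [Real.norm_eq_abs, abs_of_nonneg hgy, abs_of_nonneg (mul_nonneg h2 hM)]
  calc g p y = y ^ (-p) * (1 / Real.sqrt (1 - y ^ 2)) := by
        rw [g, mul_one_div]
    _ ≤ a ^ (-p) * ((1 - y) ^ (-(1/2) : ℝ)) := by
        exact mul_le_mul hrp (bound1 hy0.le hy1) (div_nonneg zero_le_one (Real.sqrt_nonneg _)) h2

lemma F_nonneg (p : ℝ) {a : ℝ} (h0 : 0 ≤ a) (h1 : a ≤ 1) :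
    0 ≤ ∫ y in a..1, g p y :=
  intervalIntegral.integral_nonneg h1 (fun y hy => g_nonneg p (h0.trans hy.1))

lemma F_le (p : ℝ) (hp : 0 < p) {a b : ℝ} (ha : 0 < a) (hb : b ≤ 1) (hab : a ≤ b) :
    (∫ y in a..b, g p y) ≤ a ^ (-p) * (Real.arcsin b - Real.arcsin a) := by
  have h1 : (∫ y in a..b, g p y)
      ≤ ∫ y in a..b, a ^ (-p) * (1 / Real.sqrt (1 - y ^ 2)) := by
    refine intervalIntegral.integral_mono_on hab (g_int p hp ha hb hab)
      ((int_inv_sqrt ha.le hb hab).const_mul _) (fun y hy => ?_)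
    have hy0 : 0 < y := ha.trans_le hy.1
    have hrp : y ^ (-p) ≤ a ^ (-p) :=
      Real.rpow_le_rpow_of_nonpos ha hy.1 (by linarith)
    calc g p y = y ^ (-p) * (1 / Real.sqrt (1 - y ^ 2)) := by rw [g, mul_one_div]
      _ ≤ a ^ (-p) * (1 / Real.sqrt (1 - y ^ 2)) :=
          mul_le_mul_of_nonneg_right hrp (div_nonneg zero_le_one (Real.sqrt_nonneg _))
  rwa [intervalIntegral.integral_const_mul, integral_inv_sqrt ha.le hb hab] at h1

lemma Gderiv (p : ℝ) (hp : 0 < p) {x : ℝ} (hx : x ∈ Ioo (0:ℝ) 1) :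
    HasDerivAt (fun u : ℝ => (u ^ p * (∫ y in u..1, g p y) + Real.arcsin u) / Real.pi)
      (ullmanDensity p x) x := by
  obtain ⟨hx0, hx1⟩ := hx
  have hs : Real.sqrt (1 - x ^ 2) ≠ 0 := by
    rw [Real.sqrt_ne_zero' ]; nlinarith
  have hFd : HasDerivAt (fun u => ∫ y in u..1, g p y) (-(g p x)) x := by
    refine intervalIntegral.integral_hasDerivAt_left
      (g_int p hp hx0 le_rfl hx1.le) ?_ ?_
    · exact ⟨Set.univ, Filter.univ_mem, by
        simpa [Measure.restrict_univ] using (meas_g p).stronglyMeasurable.aestronglyMeasurable⟩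
    · refine ContinuousAt.div (Real.continuousAt_rpow_const x (-p) (Or.inl hx0.ne')) ?_ hs
      exact (Real.continuous_sqrt.comp (continuous_const.sub (continuous_pow 2))).continuousAt
  have h1 : HasDerivAt (fun u : ℝ => u ^ p) (p * x ^ (p-1)) x :=
    Real.hasDerivAt_rpow_const (Or.inl hx0.ne')
  have h3 : HasDerivAt Real.arcsin (1 / Real.sqrt (1 - x ^ 2)) x :=
    Real.hasDerivAt_arcsin (by linarith : (-1:ℝ) < x).ne' hx1.ne
  have h := ((h1.mul hFd).add h3).div_const Real.pi
  have hxg : x ^ p * (x ^ (-p) / Real.sqrt (1 - x ^ 2)) = 1 / Real.sqrt (1 - x ^ 2) := by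
    rw [mul_div_assoc', ← Real.rpow_add hx0]
    norm_num
  refine h.congr_deriv ?_
  rw [ullmanDensity, abs_of_pos hx0]
  simp only [g]
  rw [mul_neg, hxg]
  ring

lemma tend0 (p : ℝ) (hp : 0 < p) :
    Filter.Tendsto (fun u : ℝ => (u ^ p * (∫ y in u..1, g p y) + Real.arcsin u) / Real.pi)
      (nhdsWithin 0 (Set.Ioi 0)) (nhds 0) := by
  have t2 : Tendsto (fun x : ℝ => Real.arcsin x) (nhdsWithin 0 (Set.Ioi 0)) (nhds 0) := by
    simpa [Real.arcsin_zero] using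
      (Real.continuous_arcsin.tendsto 0).mono_left nhdsWithin_le_nhds
  have t1 : Tendsto (fun x : ℝ => x ^ p * ∫ y in x..1, g p y)
      (nhdsWithin 0 (Set.Ioi 0)) (nhds 0) := by
    apply squeeze_zero'
    · filter_upwards [Ioo_mem_nhdsGT_of_mem (show (0:ℝ) ∈ Ico (0:ℝ) 1 from ⟨le_rfl, one_pos⟩)]
        with x hx
      exact mul_nonneg (Real.rpow_nonneg hx.1.le _) (F_nonneg p hx.1.le hx.2.le)
    · filter_upwards [Ioo_mem_nhdsGT_of_mem (show (0:ℝ) ∈ Ico (0:ℝ) 1 from ⟨le_rfl, one_pos⟩)]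
        with x hx
      obtain ⟨hx0, hx1⟩ := hx
      have hsx0 : 0 < Real.sqrt x := Real.sqrt_pos.2 hx0
      have hsx1 : Real.sqrt x ≤ 1 := by
        rw [show (1:ℝ) = Real.sqrt 1 from (Real.sqrt_one).symm]
        exact Real.sqrt_le_sqrt hx1.le
      have hxsx : x ≤ Real.sqrt x := by
        nlinarith [Real.sq_sqrt hx0.le, Real.sqrt_nonneg x]
      have hsplit : (∫ y in x..1, g p y) =
          (∫ y in x..Real.sqrt x, g p y) + ∫ y in Real.sqrt x..1, g p y :=
        (intervalIntegral.integral_add_adjacent_intervals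
          (g_int p hp hx0 hsx1 hxsx) (g_int p hp hsx0 le_rfl hsx1)).symm
      have hxp : (0:ℝ) ≤ x ^ p := Real.rpow_nonneg hx0.le _
      have e1 : x ^ p * (∫ y in x..Real.sqrt x, g p y)
          ≤ Real.arcsin (Real.sqrt x) - Real.arcsin x := by
        have h2 := mul_le_mul_of_nonneg_left (F_le p hp hx0 hsx1 hxsx) hxp
        have hxx : x ^ p * x ^ (-p) = 1 := by rw [← Real.rpow_add hx0]; norm_num
        calc x ^ p * ∫ y in x..Real.sqrt x, g p y
            ≤ x ^ p * (x ^ (-p) * (Real.arcsin (Real.sqrt x) - Real.arcsin x)) := h2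
          _ = Real.arcsin (Real.sqrt x) - Real.arcsin x := by rw [← mul_assoc, hxx, one_mul]
      have e2 : x ^ p * (∫ y in Real.sqrt x..1, g p y) ≤ x ^ (p/2) * (Real.pi/2) := by
        have hF := F_le p hp hsx0 le_rfl hsx1
        have harc : Real.arcsin 1 - Real.arcsin (Real.sqrt x) ≤ Real.pi/2 := by
          rw [Real.arcsin_one]
          have h0 : 0 ≤ Real.arcsin (Real.sqrt x) :=
            Real.arcsin_nonneg.2 (Real.sqrt_nonneg x)
          linarith
        have hpow : x ^ p * (Real.sqrt x) ^ (-p) = x ^ (p/2) := by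
          rw [Real.sqrt_eq_rpow, ← Real.rpow_mul hx0.le, ← Real.rpow_add hx0]
          congr 1
          ring
        calc x ^ p * ∫ y in Real.sqrt x..1, g p y
            ≤ x ^ p * ((Real.sqrt x) ^ (-p) * (Real.arcsin 1 - Real.arcsin (Real.sqrt x))) :=
              mul_le_mul_of_nonneg_left hF hxp
          _ = x ^ (p/2) * (Real.arcsin 1 - Real.arcsin (Real.sqrt x)) := by
              rw [← mul_assoc, hpow]
          _ ≤ x ^ (p/2) * (Real.pi/2) :=
              mul_le_mul_of_nonneg_left harc (Real.rpow_nonneg hx0.le _)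
      calc x ^ p * ∫ y in x..1, g p y
          = x ^ p * (∫ y in x..Real.sqrt x, g p y) + x ^ p * ∫ y in Real.sqrt x..1, g p y := by
            rw [hsplit, mul_add]
        _ ≤ (Real.arcsin (Real.sqrt x) - Real.arcsin x) + x ^ (p/2) * (Real.pi/2) :=
            add_le_add e1 e2
    · have c1 : Tendsto (fun x : ℝ => Real.arcsin (Real.sqrt x) - Real.arcsin x)
          (nhdsWithin 0 (Set.Ioi 0)) (nhds 0) := by
        have hc : Continuous fun x : ℝ => Real.arcsin (Real.sqrt x) - Real.arcsin x :=
          (Real.continuous_arcsin.comp Real.continuous_sqrt).sub Real.continuous_arcsin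
        simpa [Real.sqrt_zero, Real.arcsin_zero] using
          (hc.tendsto 0).mono_left nhdsWithin_le_nhds
      have c2 : Tendsto (fun x : ℝ => x ^ (p/2) * (Real.pi/2))
          (nhdsWithin 0 (Set.Ioi 0)) (nhds 0) := by
        have h0 : Tendsto (fun x : ℝ => x ^ (p/2)) (nhdsWithin 0 (Set.Ioi 0)) (nhds 0) := by
          have := (Real.continuousAt_rpow_const 0 (p/2)
            (Or.inr (by positivity))).tendsto.mono_left
            (nhdsWithin_le_nhds : nhdsWithin (0:ℝ) (Set.Ioi 0) ≤ nhds 0)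
          simpa [Real.zero_rpow (show p/2 ≠ 0 by positivity)] using this
        simpa using h0.mul_const (Real.pi/2)
      simpa using c1.add c2
  have := (t1.add t2).div_const Real.pi
  simpa using this

lemma tend1 (p : ℝ) (hp : 0 < p) :
    Filter.Tendsto (fun u : ℝ => (u ^ p * (∫ y in u..1, g p y) + Real.arcsin u) / Real.pi)
      (nhdsWithin 1 (Set.Iio 1)) (nhds (1/2)) := by
  have t2 : Tendsto (fun x : ℝ => Real.arcsin x) (nhdsWithin 1 (Set.Iio 1))
      (nhds (Real.pi/2)) := by
    simpa [Real.arcsin_one] using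
      (Real.continuous_arcsin.tendsto 1).mono_left nhdsWithin_le_nhds
  have t1 : Tendsto (fun x : ℝ => x ^ p * ∫ y in x..1, g p y)
      (nhdsWithin 1 (Set.Iio 1)) (nhds 0) := by
    apply squeeze_zero'
    · filter_upwards [Ioo_mem_nhdsLT_of_mem
        (show (1:ℝ) ∈ Ioc (1/2 : ℝ) 1 from ⟨by norm_num, le_rfl⟩)] with x hx
      have hx0 : (0:ℝ) < x := by linarith [hx.1]
      exact mul_nonneg (Real.rpow_nonneg hx0.le _) (F_nonneg p hx0.le hx.2.le)
    · filter_upwards [Ioo_mem_nhdsLT_of_mem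
        (show (1:ℝ) ∈ Ioc (1/2 : ℝ) 1 from ⟨by norm_num, le_rfl⟩)] with x hx
      have hx0 : (0:ℝ) < x := by linarith [hx.1]
      have hxp1 : x ^ p ≤ 1 := Real.rpow_le_one hx0.le hx.2.le hp.le
      have hF := F_le p hp hx0 le_rfl hx.2.le
      have hx2 : x ^ (-p) ≤ (2:ℝ) ^ p := by
        have h12 : ((1:ℝ)/2) ^ (-p) = (2:ℝ) ^ p := by
          rw [one_div, Real.inv_rpow (by norm_num), ← Real.rpow_neg (by norm_num), neg_neg]
        rw [← h12]
        exact Real.rpow_le_rpow_of_nonpos (by norm_num) hx.1.le (by linarith)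
      have harcge : 0 ≤ Real.arcsin 1 - Real.arcsin x := by
        rw [Real.arcsin_one]
        linarith [Real.arcsin_le_pi_div_two x]
      have hFnn : 0 ≤ ∫ y in x..1, g p y := F_nonneg p hx0.le hx.2.le
      calc x ^ p * ∫ y in x..1, g p y
          ≤ 1 * ∫ y in x..1, g p y := mul_le_mul_of_nonneg_right hxp1 hFnn
        _ = ∫ y in x..1, g p y := one_mul _
        _ ≤ x ^ (-p) * (Real.arcsin 1 - Real.arcsin x) := hF
        _ ≤ (2:ℝ) ^ p * (Real.arcsin 1 - Real.arcsin x) :=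
            mul_le_mul_of_nonneg_right hx2 harcge
    · have hc : Continuous fun x : ℝ => (2:ℝ) ^ p * (Real.arcsin 1 - Real.arcsin x) :=
        continuous_const.mul (continuous_const.sub Real.continuous_arcsin)
      have := (hc.tendsto 1).mono_left (nhdsWithin_le_nhds :
        nhdsWithin (1:ℝ) (Set.Iio 1) ≤ nhds 1)
      simpa using this
  have h := (t1.add t2).div_const Real.pi
  rw [show ((0:ℝ) + Real.pi/2) / Real.pi = 1/2 by
    field_simp
    ring] at h
  exact h


lemma ullman_nonneg (p : ℝ) (hp : 0 < p) {x : ℝ} (h1 : |x| ≤ 1) : 0 ≤ ullmanDensity p x := by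
  unfold ullmanDensity
  apply mul_nonneg
  · exact div_nonneg (mul_nonneg hp.le (Real.rpow_nonneg (abs_nonneg x) _)) Real.pi_pos.le
  · exact F_nonneg p (abs_nonneg x) h1

lemma key_int (p : ℝ) (hp : 0 < p) :
    IntervalIntegrable (ullmanDensity p) volume 0 1 := by
  set G : ℝ → ℝ := fun u => (u ^ p * (∫ y in u..1, g p y) + Real.arcsin u) / Real.pi with hG
  set H : ℝ → ℝ := Function.update (Function.update G 0 0) 1 (1/2) with hH
  have Hderiv : ∀ x ∈ Ioo (0:ℝ) 1, HasDerivAt H (ullmanDensity p x) x := by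
    refine fun x hx => (Gderiv p hp hx).congr_of_eventuallyEq ?_
    filter_upwards [Ioo_mem_nhds hx.1 hx.2] with y hy
    rw [hH, Function.update_of_ne hy.2.ne, Function.update_of_ne hy.1.ne']
  have Hcont : ContinuousOn H (Icc 0 1) := by
    rw [hH, continuousOn_update_iff, continuousOn_update_iff, Icc_sdiff_right, Ico_sdiff_left]
    refine ⟨⟨fun z hz => (Gderiv p hp hz).continuousAt.continuousWithinAt, ?_⟩, ?_⟩
    · exact fun _ => (tend0 p hp).mono_left (nhdsWithin_mono _ Ioo_subset_Ioi_self)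
    · rintro -
      refine ((tend1 p hp).congr' ?_).mono_left (nhdsWithin_mono _ Ico_subset_Iio_self)
      filter_upwards [Ioo_mem_nhdsLT_of_mem (right_mem_Ioc.2 zero_lt_one)] with z hz
      exact (Function.update_of_ne hz.1.ne' (0:ℝ) G).symm
  refine intervalIntegrable_deriv_of_nonneg (g := H) ?_ ?_ ?_
  · rwa [uIcc_of_le zero_le_one]
  · rw [min_eq_left zero_le_one, max_eq_right zero_le_one]
    exact Hderiv
  · intro x hx
    rw [min_eq_left zero_le_one, max_eq_right zero_le_one] at hx
    exact ullman_nonneg p hp (by rw [abs_of_pos hx.1]; exact hx.2.le)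

lemma key_eq (p : ℝ) (hp : 0 < p) :
    ∫ x in (0:ℝ)..1, ullmanDensity p x = 1/2 := by
  have h := intervalIntegral.integral_eq_sub_of_hasDerivAt_of_tendsto zero_lt_one
    (fun x hx => Gderiv p hp hx) (key_int p hp) (tend0 p hp) (tend1 p hp)
  rw [h]
  norm_num

end UllmanAux

/-- For `p > 0`, the Ullman density integrates to 1 on `[-1,1]`,
hence defines a probability measure on `[-1,1]`. -/
theorem stmt0 (p : ℝ) (hp : 0 < p) :
    ∫ x in (-1:ℝ)..1, ullmanDensity p x = 1 := by
  have heven : ∀ x : ℝ, ullmanDensity p (-x) = ullmanDensity p x := fun x => by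
    simp [ullmanDensity, abs_neg]
  have h2 := UllmanAux.key_int p hp
  have h1 : IntervalIntegrable (ullmanDensity p) volume (-1) 0 := by
    have h3 := (IntervalIntegrable.iff_comp_neg (f := ullmanDensity p)).mp h2
    simp only [heven, neg_zero] at h3
    exact h3.symm
  have hneg : ∫ x in (-1:ℝ)..0, ullmanDensity p x = ∫ x in (0:ℝ)..1, ullmanDensity p x := by
    have h4 := intervalIntegral.integral_comp_neg (fun x => ullmanDensity p x) (a := 0) (b := 1)
    simp only [heven, neg_zero] at h4
    exact h4.symm
  rw [← intervalIntegral.integral_add_adjacent_intervals h1 h2, hneg,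
    UllmanAux.key_eq p hp]
  norm_num
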